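/- Let G be a finite gradable simple graph and let f, f' be two gradations on G. Then f and f' are equivalent (i.e., f' can be obtained from f by a finite sequence of lowerings at top vertices and liftings at bottom vertices) if and only if f(v) − f'(v) is even for every vertex v of G. -/

import Mathlib

/-- A gradation on a simple graph: adjacent vertices have values differing by ±1. -/
def IsGradation {V : Type*} (G : SimpleGraph V) (f : V → ℤ) : Prop :=
  ∀ ⦃a b : V⦄, G.Adj a b → f a - f b = 1 ∨ f a - f b = -1

/-- A top vertex: every neighbor has value one less. -/
def IsTopVertex {V : Type*} (G : SimpleGraph V) (f : V → ℤ) (v : V) : Prop :=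
  ∀ u : V, G.Adj v u → f u = f v - 1

/-- A bottom vertex: every neighbor has value one more. -/
def IsBottomVertex {V : Type*} (G : SimpleGraph V) (f : V → ℤ) (v : V) : Prop :=
  ∀ u : V, G.Adj v u → f u = f v + 1

/-- One elementary step: a lowering at a top vertex or a lifting at a bottom vertex. -/
def GradStep {V : Type*} [DecidableEq V] (G : SimpleGraph V) (f f' : V → ℤ) : Prop :=
  (∃ v : V, IsTopVertex G f v ∧ f' = Function.update f v (f v - 2)) ∨
  (∃ v : V, IsBottomVertex G f v ∧ f' = Function.update f v (f v + 2))

lemma gradstep_parity {V : Type*} [DecidableEq V] {G : SimpleGraph V} {f f' : V → ℤ}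
    (h : GradStep G f f') (v : V) : Even (f v - f' v) := by
  rcases h with ⟨w, _, rfl⟩ | ⟨w, _, rfl⟩ <;> rcases eq_or_ne v w with rfl | hv
  · simp only [Function.update_self]; exact ⟨1, by ring⟩
  · rw [Function.update_of_ne hv]; exact ⟨0, by ring⟩
  · simp only [Function.update_self]; exact ⟨-1, by ring⟩
  · rw [Function.update_of_ne hv]; exact ⟨0, by ring⟩

lemma grad_lower {V : Type*} [DecidableEq V] {G : SimpleGraph V}
    {f : V → ℤ} (hf : IsGradation G f) {v : V} (hv : IsTopVertex G f v) :
    IsGradation G (Function.update f v (f v - 2)) := by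
  intro a b hab
  rcases eq_or_ne a v with rfl | ha
  · have hb : b ≠ a := fun h => G.loopless.irrefl _ (h ▸ hab)
    rw [Function.update_self, Function.update_of_ne hb, hv b hab]
    right; ring
  · rw [Function.update_of_ne ha]
    rcases eq_or_ne b v with rfl | hb
    · rw [Function.update_self, hv a hab.symm]
      left; ring
    · rw [Function.update_of_ne hb]; exact hf hab

lemma grad_lift {V : Type*} [DecidableEq V] {G : SimpleGraph V}
    {f : V → ℤ} (hf : IsGradation G f) {v : V} (hv : IsBottomVertex G f v) :
    IsGradation G (Function.update f v (f v + 2)) := by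
  intro a b hab
  rcases eq_or_ne a v with rfl | ha
  · have hb : b ≠ a := fun h => G.loopless.irrefl _ (h ▸ hab)
    rw [Function.update_self, Function.update_of_ne hb, hv b hab]
    left; ring
  · rw [Function.update_of_ne ha]
    rcases eq_or_ne b v with rfl | hb
    · rw [Function.update_self, hv a hab.symm]
      right; ring
    · rw [Function.update_of_ne hb]; exact hf hab

lemma reach_of_even {V : Type*} [Fintype V] [DecidableEq V] (G : SimpleGraph V) :
    ∀ n : ℕ, ∀ f f' : V → ℤ, IsGradation G f → IsGradation G f' →
      (∀ v, Even (f v - f' v)) → (∑ v, (f v - f' v).natAbs) ≤ n →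
      Relation.ReflTransGen (GradStep G) f f' := by
  intro n
  induction n with
  | zero =>
    intro f f' _ _ _ hsum
    have : ∀ v : V, (f v - f' v).natAbs = 0 := by
      intro v
      have := Finset.sum_eq_zero_iff.mp (Nat.le_zero.mp hsum) v (Finset.mem_univ v)
      exact this
    have : f = f' := funext fun v => by have := this v; omega
    exact this ▸ Relation.ReflTransGen.refl
  | succ n ih =>
    intro f f' hf hf' heven hsum
    by_cases hfe : f = f'
    · exact hfe ▸ Relation.ReflTransGen.refl
    have hne : ∃ v0, f v0 ≠ f' v0 := by
      by_contra h; push_neg at h; exact hfe (funext h)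
    obtain ⟨v0, hv0⟩ := hne
    rcases lt_or_gt_of_ne hv0 with hlt | hgt
    · -- f v0 < f' v0 : lift at a minimal bottom vertex
      set S : Finset V := Finset.univ.filter (fun v => f v < f' v) with hS
      have hSne : S.Nonempty := ⟨v0, by simp [hS, hlt]⟩
      obtain ⟨v, hvS, hvmin⟩ := S.exists_min_image f hSne
      have hv : f v < f' v := by
        have := hvS; simp [hS] at this; exact this
      have hge2 : f' v - f v ≥ 2 := by
        obtain ⟨r, hr⟩ := heven v; omega
      have hbot : IsBottomVertex G f v := by
        intro u hadj
        rcases hf hadj with h1 | h1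
        · exfalso
          have huS : u ∈ S := by
            simp only [hS, Finset.mem_filter, Finset.mem_univ, true_and]
            rcases hf' hadj with h2 | h2 <;> omega
          have := hvmin u huS
          omega
        · omega
      set g : V → ℤ := Function.update f v (f v + 2) with hg
      have hstep : GradStep G f g := Or.inr ⟨v, hbot, rfl⟩
      have hgrad : IsGradation G g := grad_lift hf hbot
      have heven' : ∀ u, Even (g u - f' u) := by
        intro u
        rcases eq_or_ne u v with rfl | hu
        · rw [hg, Function.update_self]
          obtain ⟨r, hr⟩ := heven u; exact ⟨r + 1, by omega⟩
        · rw [hg, Function.update_of_ne hu]; exact heven u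
      have hsum' : ∑ u, (g u - f' u).natAbs ≤ n := by
        have h1 : ∑ u ∈ Finset.univ.erase v, (g u - f' u).natAbs
            = ∑ u ∈ Finset.univ.erase v, (f u - f' u).natAbs := by
          refine Finset.sum_congr rfl fun u hu => ?_
          rw [hg, Function.update_of_ne (Finset.mem_erase.mp hu).1]
        have h2 : (g v - f' v).natAbs + 2 = (f v - f' v).natAbs := by
          rw [hg, Function.update_self]; omega
        have e1 := Finset.sum_erase_add Finset.univ (fun u => (g u - f' u).natAbs)
          (Finset.mem_univ v)
        have e2 := Finset.sum_erase_add Finset.univ (fun u => (f u - f' u).natAbs)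
          (Finset.mem_univ v)
        omega
      exact Relation.ReflTransGen.head hstep (ih g f' hgrad hf' heven' hsum')
    · -- f v0 > f' v0 : lower at a maximal top vertex
      set S : Finset V := Finset.univ.filter (fun v => f' v < f v) with hS
      have hSne : S.Nonempty := ⟨v0, by simp [hS, hgt]⟩
      obtain ⟨v, hvS, hvmax⟩ := S.exists_max_image f hSne
      have hv : f' v < f v := by
        have := hvS; simp [hS] at this; exact this
      have hge2 : f v - f' v ≥ 2 := by
        obtain ⟨r, hr⟩ := heven v; omega
      have htop : IsTopVertex G f v := by
        intro u hadj
        rcases hf hadj with h1 | h1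
        · omega
        · exfalso
          have huS : u ∈ S := by
            simp only [hS, Finset.mem_filter, Finset.mem_univ, true_and]
            rcases hf' hadj with h2 | h2 <;> omega
          have := hvmax u huS
          omega
      set g : V → ℤ := Function.update f v (f v - 2) with hg
      have hstep : GradStep G f g := Or.inl ⟨v, htop, rfl⟩
      have hgrad : IsGradation G g := grad_lower hf htop
      have heven' : ∀ u, Even (g u - f' u) := by
        intro u
        rcases eq_or_ne u v with rfl | hu
        · rw [hg, Function.update_self]
          obtain ⟨r, hr⟩ := heven u; exact ⟨r - 1, by omega⟩
        · rw [hg, Function.update_of_ne hu]; exact heven u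
      have hsum' : ∑ u, (g u - f' u).natAbs ≤ n := by
        have h1 : ∑ u ∈ Finset.univ.erase v, (g u - f' u).natAbs
            = ∑ u ∈ Finset.univ.erase v, (f u - f' u).natAbs := by
          refine Finset.sum_congr rfl fun u hu => ?_
          rw [hg, Function.update_of_ne (Finset.mem_erase.mp hu).1]
        have h2 : (g v - f' v).natAbs + 2 = (f v - f' v).natAbs := by
          rw [hg, Function.update_self]; omega
        have e1 := Finset.sum_erase_add Finset.univ (fun u => (g u - f' u).natAbs)
          (Finset.mem_univ v)
        have e2 := Finset.sum_erase_add Finset.univ (fun u => (f u - f' u).natAbs)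
          (Finset.mem_univ v)
        omega
      exact Relation.ReflTransGen.head hstep (ih g f' hgrad hf' heven' hsum')

/-- Two gradations on a finite gradable graph are equivalent (one is obtained from the
other by a finite composite of lowerings and liftings) iff their difference is even at
every vertex. -/
theorem gradations_equivalent_iff_even_difference
    {V : Type*} [Fintype V] [DecidableEq V] (G : SimpleGraph V)
    (f f' : V → ℤ) (hf : IsGradation G f) (hf' : IsGradation G f') :
    Relation.ReflTransGen (GradStep G) f f' ↔ ∀ v : V, Even (f v - f' v) := by
  constructor
  · intro h
    clear hf hf'
    induction h with
    | refl => intro v; exact ⟨0, by ring⟩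
    | tail _ hstep ih =>
      intro v
      obtain ⟨r, hr⟩ := ih v
      obtain ⟨s, hs⟩ := gradstep_parity hstep v
      exact ⟨r + s, by omega⟩
  · intro h
    exact reach_of_even G (∑ v, (f v - f' v).natAbs) f f' hf hf' h le_rfl
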